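/- Let N ≥ 3, n ∈ ℕ, 0 ≤ k ≤ n, and set β_n = (2n+N)(2n+N−2)/(N(N−2)). Let H : ℝ^N → ℝ be a harmonic polynomial that is homogeneous of degree k. Then the function w(x) = H(x) · (1 + |x|²)^{−(k+(N−2)/2)} · P_{n−k}^{(k+(N−2)/2, k+(N−2)/2)}( (1 − |x|²)/(1 + |x|²) ) satisfies −Δw(x) = β_n · U(x)^{4/(N−2)} · w(x) for every x ∈ ℝ^N. -/

import Mathlib

open scoped BigOperators
open scoped RealInnerProductSpace

/-- Second directional derivative of `f` at `x` in direction `v`. -/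
noncomputable def secondDeriv {E : Type*} [NormedAddCommGroup E] [NormedSpace ℝ E]
    (f : E → ℝ) (v : E) (x : E) : ℝ :=
  fderiv ℝ (fun y => fderiv ℝ f y v) x v

/-- The Laplacian (sum of second partial derivatives) on `ℝ^N`. -/
noncomputable def laplacian {N : ℕ} (f : EuclideanSpace ℝ (Fin N) → ℝ)
    (x : EuclideanSpace ℝ (Fin N)) : ℝ :=
  ∑ i : Fin N, secondDeriv f (EuclideanSpace.single i 1) x

/-- The standard bubble `U(x) = (N(N-2))^((N-2)/4) (1+|x|^2)^(-(N-2)/2)`. -/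
noncomputable def U (N : ℕ) (x : EuclideanSpace ℝ (Fin N)) : ℝ :=
  ((N : ℝ) * ((N : ℝ) - 2)) ^ (((N : ℝ) - 2) / 4) * (1 + ‖x‖ ^ 2) ^ (-(((N : ℝ) - 2) / 2))

/-- Generalized binomial coefficient `C(a, k) = a(a-1)⋯(a-k+1)/k!`. -/
noncomputable def genBinom (a : ℝ) (k : ℕ) : ℝ :=
  (∏ i ∈ Finset.range k, (a - i)) / (Nat.factorial k)

/-- The Jacobi polynomial `P_m^{(b,c)}`. -/
noncomputable def jacobiP (m : ℕ) (b c : ℝ) (x : ℝ) : ℝ :=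
  ∑ s ∈ Finset.range (m + 1),
    genBinom ((m : ℝ) + b) s * genBinom ((m : ℝ) + c) (m - s) *
      ((x - 1) / 2) ^ (m - s) * ((x + 1) / 2) ^ s

/-! ### Auxiliary algebraic lemmas -/

lemma genBinom_succ (a : ℝ) (p : ℕ) :
    ((p : ℝ) + 1) * genBinom a (p + 1) = (a - p) * genBinom a p := by
  unfold genBinom
  rw [Finset.prod_range_succ, Nat.factorial_succ]
  have h1 : ((p.factorial : ℝ)) ≠ 0 := Nat.cast_ne_zero.2 p.factorial_ne_zero
  have h2 : ((p : ℝ) + 1) ≠ 0 := by positivity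
  push_cast
  field_simp

noncomputable def dcoef (a : ℝ) (m j : ℕ) : ℝ :=
  (-1) ^ j * genBinom ((m : ℝ) + a) j * genBinom ((m : ℝ) + a) (m - j)

lemma dcoef_rec (a : ℝ) (m j : ℕ) (hj : j < m) :
    ((j : ℝ) + 1) * (a + j + 1) * dcoef a m (j + 1)
      = -(((m : ℝ) - j) * ((m : ℝ) + a - j)) * dcoef a m j := by
  obtain ⟨p, hp⟩ : ∃ p, m - j = p + 1 := ⟨m - j - 1, by omega⟩
  have hmj : m - (j + 1) = p := by omega
  have hm : m = p + 1 + j := by omega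
  have hpc : (p : ℝ) = (m : ℝ) - (j : ℝ) - 1 := by
    subst hm; push_cast; ring
  have h1 := genBinom_succ ((m : ℝ) + a) j
  have h2 := genBinom_succ ((m : ℝ) + a) p
  rw [hpc] at h2
  unfold dcoef
  rw [hmj, hp, pow_succ]
  linear_combination -((-1:ℝ))^j * (a + (j:ℝ) + 1) * genBinom ((m:ℝ)+a) p * h1
    + ((-1:ℝ))^j * ((m:ℝ) + a - j) * genBinom ((m:ℝ)+a) j * h2

noncomputable def Qf (a : ℝ) (m : ℕ) (t : ℝ) : ℝ :=
  ∑ j ∈ Finset.range (m + 1), dcoef a m j * t ^ j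

noncomputable def Qf1 (a : ℝ) (m : ℕ) (t : ℝ) : ℝ :=
  ∑ j ∈ Finset.range (m + 1), dcoef a m j * ((j : ℝ) * t ^ (j - 1))

noncomputable def Qf2 (a : ℝ) (m : ℕ) (t : ℝ) : ℝ :=
  ∑ j ∈ Finset.range (m + 1), dcoef a m j * ((j : ℝ) * (((j : ℝ) - 1) * t ^ (j - 2)))

lemma keyODE (a : ℝ) (m : ℕ) (t : ℝ) :
    4 * t * (1 + t) * Qf2 a m t
      + ((4 * a + 4) * (1 + t) - 8 * ((m : ℝ) + a) * t) * Qf1 a m t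
      + 4 * (m : ℝ) * ((m : ℝ) + a) * Qf a m t = 0 := by
  unfold Qf Qf1 Qf2
  rw [Finset.mul_sum, Finset.mul_sum, Finset.mul_sum, ← Finset.sum_add_distrib,
    ← Finset.sum_add_distrib]
  have hsplit : ∀ j ∈ Finset.range (m + 1),
      (4 * t * (1 + t) * (dcoef a m j * ((j : ℝ) * (((j : ℝ) - 1) * t ^ (j - 2))))
        + ((4 * a + 4) * (1 + t) - 8 * ((m : ℝ) + a) * t) * (dcoef a m j * ((j : ℝ) * t ^ (j - 1)))
        + 4 * (m : ℝ) * ((m : ℝ) + a) * (dcoef a m j * t ^ j))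
      = dcoef a m j * (4 * (j : ℝ) * ((j : ℝ) + a)) * t ^ (j - 1)
        + dcoef a m j * (4 * ((j : ℝ) - m) * ((j : ℝ) - m - a)) * t ^ j := by
    intro j _
    match j with
    | 0 => push_cast; ring
    | 1 => push_cast; ring
    | (j + 2) =>
      have e1 : (j + 2) - 1 = j + 1 := rfl
      have e2 : (j + 2) - 2 = j := rfl
      rw [e1, e2]
      push_cast
      ring
  rw [Finset.sum_congr rfl hsplit, Finset.sum_add_distrib, Finset.sum_range_succ',
    Finset.sum_range_succ]
  have hz0 : dcoef a m 0 * (4 * ((0 : ℕ) : ℝ) * (((0 : ℕ) : ℝ) + a)) * t ^ (0 - 1) = 0 := by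
    push_cast; ring
  have hzm : dcoef a m m * (4 * ((m : ℝ) - m) * ((m : ℝ) - m - a)) * t ^ m = 0 := by
    ring_nf
  rw [hz0, hzm, add_zero, add_zero, ← Finset.sum_add_distrib]
  apply Finset.sum_eq_zero
  intro j hj
  have hjm : j < m := Finset.mem_range.mp hj
  have hrec := dcoef_rec a m j hjm
  have e1 : (j + 1) - 1 = j := rfl
  rw [e1]
  push_cast
  linear_combination 4 * t ^ j * hrec

/-! ### The radial function and its derivatives -/

noncomputable def F0 (a : ℝ) (m : ℕ) (t : ℝ) : ℝ :=
  (1 + t) ^ (-((m : ℝ) + a)) * Qf a m t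

noncomputable def F1 (a : ℝ) (m : ℕ) (t : ℝ) : ℝ :=
  (-((m : ℝ) + a)) * (1 + t) ^ (-((m : ℝ) + a) - 1) * Qf a m t
    + (1 + t) ^ (-((m : ℝ) + a)) * Qf1 a m t

noncomputable def F2 (a : ℝ) (m : ℕ) (t : ℝ) : ℝ :=
  (-((m : ℝ) + a)) * (-((m : ℝ) + a) - 1) * (1 + t) ^ (-((m : ℝ) + a) - 2) * Qf a m t
    + 2 * (-((m : ℝ) + a)) * (1 + t) ^ (-((m : ℝ) + a) - 1) * Qf1 a m t
    + (1 + t) ^ (-((m : ℝ) + a)) * Qf2 a m t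

lemma hasDerivAt_one_add_rpow (c : ℝ) {t : ℝ} (ht : -1 < t) :
    HasDerivAt (fun s : ℝ => (1 + s) ^ c) (c * (1 + t) ^ (c - 1)) t := by
  have h1 : HasDerivAt (fun s : ℝ => 1 + s) 1 t := (hasDerivAt_id t).const_add 1
  have h2 := Real.hasDerivAt_rpow_const (x := 1 + t) (p := c) (Or.inl (by linarith))
  have h3 := h2.comp t h1
  rw [mul_one] at h3
  exact h3

lemma hasDerivAt_Qf (a : ℝ) (m : ℕ) (t : ℝ) : HasDerivAt (Qf a m) (Qf1 a m t) t := by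
  unfold Qf Qf1
  apply HasDerivAt.fun_sum
  intro j _
  exact (hasDerivAt_pow j t).const_mul (dcoef a m j)

lemma hasDerivAt_Qf1 (a : ℝ) (m : ℕ) (t : ℝ) : HasDerivAt (Qf1 a m) (Qf2 a m t) t := by
  unfold Qf1 Qf2
  apply HasDerivAt.fun_sum
  intro j _
  have h := ((hasDerivAt_pow (j - 1) t).const_mul ((j : ℝ))).const_mul (dcoef a m j)
  have he : dcoef a m j * ((j : ℝ) * (((j - 1 : ℕ) : ℝ) * t ^ (j - 1 - 1)))
      = dcoef a m j * ((j : ℝ) * (((j : ℝ) - 1) * t ^ (j - 2))) := by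
    match j with
    | 0 => simp
    | (j + 1) =>
      have e1 : j + 1 - 1 - 1 = j + 1 - 2 := by omega
      rw [e1]; push_cast; ring
  rw [← he]
  exact h

lemma hasDerivAt_F0 (a : ℝ) (m : ℕ) {t : ℝ} (ht : -1 < t) :
    HasDerivAt (F0 a m) (F1 a m t) t := by
  have h := (hasDerivAt_one_add_rpow (-((m : ℝ) + a)) ht).mul (hasDerivAt_Qf a m t)
  unfold F0 F1
  exact h

lemma hasDerivAt_F1 (a : ℝ) (m : ℕ) {t : ℝ} (ht : -1 < t) :
    HasDerivAt (F1 a m) (F2 a m t) t := by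
  have h1 := ((hasDerivAt_one_add_rpow (-((m : ℝ) + a) - 1) ht).mul
      (hasDerivAt_Qf a m t)).const_mul (-((m : ℝ) + a))
  have h2 := (hasDerivAt_one_add_rpow (-((m : ℝ) + a)) ht).mul (hasDerivAt_Qf1 a m t)
  have h := h1.add h2
  unfold F1 F2
  have e : -((m : ℝ) + a) - 1 - 1 = -((m : ℝ) + a) - 2 := by ring
  convert h using 1 <;> try rfl
  · funext s; simp only [Pi.add_apply, Pi.mul_apply]; ring
  · rw [e]; ring

lemma FODE (a : ℝ) (m : ℕ) {t : ℝ} (ht : -1 < t) :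
    4 * t * F2 a m t + (4 * a + 4) * F1 a m t
      = -(4 * ((m : ℝ) + a) * ((m : ℝ) + a + 1)) * ((1 + t) ^ (-((m : ℝ) + a) - 2) * Qf a m t) := by
  have hpos : (0 : ℝ) < 1 + t := by linarith
  have h2 : (1 + t) ^ ((2 : ℝ)) = (1 + t) * (1 + t) := by
    rw [show (2 : ℝ) = ((2 : ℕ) : ℝ) by norm_num, Real.rpow_natCast]; ring
  have e1 : (1 + t) ^ (-((m : ℝ) + a)) = (1 + t) ^ (-((m : ℝ) + a) - 2) * ((1 + t) * (1 + t)) := by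
    have h3 := Real.rpow_add hpos (-((m : ℝ) + a) - 2) 2
    rw [h2] at h3
    nth_rewrite 1 [show -((m : ℝ) + a) = -((m : ℝ) + a) - 2 + 2 by ring]
    rw [h3]
  have e2 : (1 + t) ^ (-((m : ℝ) + a) - 1) = (1 + t) ^ (-((m : ℝ) + a) - 2) * (1 + t) := by
    have h3 := Real.rpow_add hpos (-((m : ℝ) + a) - 2) 1
    rw [Real.rpow_one] at h3
    rw [show -((m : ℝ) + a) - 1 = -((m : ℝ) + a) - 2 + 1 by ring, h3]
  unfold F1 F2
  rw [e1, e2]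
  linear_combination (1 + t) ^ (-((m : ℝ) + a) - 2) * (1 + t) * keyODE a m t

/-! ### Rewriting the Jacobi expression -/

lemma jacobi_rewrite (a : ℝ) (m : ℕ) {t : ℝ} (ht : 0 ≤ t) :
    (1 + t) ^ (-a) * jacobiP m a a ((1 - t) / (1 + t)) = F0 a m t := by
  have hu : (0 : ℝ) < 1 + t := by linarith
  have hne : (1 + t) ≠ 0 := ne_of_gt hu
  have hx1 : ((1 - t) / (1 + t) - 1) / 2 = -t / (1 + t) := by
    field_simp
    ring
  have hx2 : ((1 - t) / (1 + t) + 1) / 2 = 1 / (1 + t) := by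
    field_simp
    ring
  unfold jacobiP
  rw [hx1, hx2]
  have hterm : ∀ s ∈ Finset.range (m + 1),
      genBinom ((m : ℝ) + a) s * genBinom ((m : ℝ) + a) (m - s) * (-t / (1 + t)) ^ (m - s)
        * (1 / (1 + t)) ^ s
      = genBinom ((m : ℝ) + a) s * genBinom ((m : ℝ) + a) (m - s) * (-t) ^ (m - s)
          / (1 + t) ^ m := by
    intro s hs
    have hsm : s ≤ m := Nat.lt_succ_iff.mp (Finset.mem_range.mp hs)
    have hpow : (1 + t) ^ (m - s) * (1 + t) ^ s = (1 + t) ^ m := by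
      rw [← pow_add]
      congr 1
      omega
    rw [div_pow, div_pow, one_pow, mul_assoc, div_mul_div_comm, hpow]
    ring
  rw [Finset.sum_congr rfl hterm, ← Finset.sum_div]
  have hsum : ∑ s ∈ Finset.range (m + 1),
      genBinom ((m : ℝ) + a) s * genBinom ((m : ℝ) + a) (m - s) * (-t) ^ (m - s)
        = Qf a m t := by
    have hrefl := Finset.sum_range_reflect
      (fun j => genBinom ((m : ℝ) + a) j * genBinom ((m : ℝ) + a) (m - j) * (-t) ^ (m - j)) (m + 1)
    rw [← hrefl]
    unfold Qf dcoef
    apply Finset.sum_congr rfl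
    intro j hj
    have hjm : j ≤ m := Nat.lt_succ_iff.mp (Finset.mem_range.mp hj)
    have e1 : m + 1 - 1 - j = m - j := by omega
    have e2 : m - (m - j) = j := by omega
    rw [e1, e2]
    rw [show (-t) ^ j = (-1 : ℝ) ^ j * t ^ j by rw [neg_pow]]
    ring
  rw [hsum]
  unfold F0
  have hC : (1 + t) ^ (-((m : ℝ) + a)) = (1 + t) ^ (-a) / (1 + t) ^ m := by
    rw [← Real.rpow_natCast (1 + t) m, ← Real.rpow_sub hu]
    congr 1
    ring
  rw [hC]
  ring

/-! ### Analysis: smoothness, Euler identity, Laplacian of `H · f(|x|²)` -/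

lemma contDiff_mvpoly (N : ℕ) (P : MvPolynomial (Fin N) ℝ) :
    ContDiff ℝ ⊤ (fun x : EuclideanSpace ℝ (Fin N) => MvPolynomial.eval (fun i => x i) P) := by
  induction P using MvPolynomial.induction_on with
  | C c => simpa using contDiff_const (c := c)
  | add p q hp hq => simpa using hp.add hq
  | mul_X p i hp =>
    have hcoord : ContDiff ℝ ⊤ (fun x : EuclideanSpace ℝ (Fin N) => x i) :=
      (EuclideanSpace.proj (𝕜 := ℝ) i).contDiff
    simpa using hp.mul hcoord

lemma euler_identity {N k : ℕ} (H : EuclideanSpace ℝ (Fin N) → ℝ) (hH : ContDiff ℝ ⊤ H)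
    (hhom : ∀ c : ℝ, 0 < c → ∀ x, H (c • x) = c ^ k * H x)
    (x : EuclideanSpace ℝ (Fin N)) :
    fderiv ℝ H x x = (k : ℝ) * H x := by
  have hd : HasDerivAt (fun c : ℝ => H (c • x)) (fderiv ℝ H x x) 1 := by
    have h1 : HasDerivAt (fun c : ℝ => c • x) x 1 := by
      simpa using (hasDerivAt_id (1 : ℝ)).smul_const x
    have h2 : HasFDerivAt H (fderiv ℝ H x) ((1 : ℝ) • x) := by
      rw [one_smul]
      exact (hH.differentiable (by simp) x).hasFDerivAt
    exact h2.comp_hasDerivAt 1 h1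
  have h2 : HasDerivAt (fun c : ℝ => c ^ k * H x) ((k : ℝ) * H x) 1 := by
    simpa using (hasDerivAt_pow k (1 : ℝ)).mul_const (H x)
  have heq : (fun c : ℝ => c ^ k * H x) =ᶠ[nhds 1] fun c : ℝ => H (c • x) := by
    filter_upwards [eventually_gt_nhds (show (0:ℝ) < 1 by norm_num)] with c hc
    exact (hhom c hc x).symm
  exact hd.unique (h2.congr_of_eventuallyEq heq.symm)

lemma hasFDerivAt_normsq {N : ℕ} (y : EuclideanSpace ℝ (Fin N)) :
    HasFDerivAt (fun z : EuclideanSpace ℝ (Fin N) => ‖z‖ ^ 2)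
      ((2 : ℝ) • (innerSL ℝ y)) y := by
  have h := (hasFDerivAt_id y).inner ℝ (hasFDerivAt_id y)
  have hfun : (fun t : EuclideanSpace ℝ (Fin N) => (inner ℝ t t : ℝ))
      = fun z : EuclideanSpace ℝ (Fin N) => ‖z‖ ^ 2 :=
    funext fun t => real_inner_self_eq_norm_sq t
  simp only [id] at h
  rw [hfun] at h
  convert h using 1 <;> try rfl
  ext v
  simp [fderivInnerCLM_apply, real_inner_comm, two_mul, mul_comm]

lemma sum_coord_smul_single {N : ℕ} (x : EuclideanSpace ℝ (Fin N)) :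
    (∑ i : Fin N, x i • EuclideanSpace.single i (1 : ℝ)) = x := by
  ext j
  simp [Pi.single_apply]

lemma normsq_eq_sum {N : ℕ} (x : EuclideanSpace ℝ (Fin N)) :
    ‖x‖ ^ 2 = ∑ i : Fin N, x i ^ 2 := by
  rw [EuclideanSpace.norm_eq, Real.sq_sqrt (by positivity)]
  simp [sq_abs]

lemma laplacian_mul_radial {N : ℕ} (H : EuclideanSpace ℝ (Fin N) → ℝ) (hH : ContDiff ℝ ⊤ H)
    (f₀ f₁ f₂ : ℝ → ℝ)
    (hf1 : ∀ t : ℝ, -1 < t → HasDerivAt f₀ (f₁ t) t)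
    (hf2 : ∀ t : ℝ, -1 < t → HasDerivAt f₁ (f₂ t) t)
    (x : EuclideanSpace ℝ (Fin N)) :
    laplacian (fun y => H y * f₀ (‖y‖ ^ 2)) x =
      laplacian H x * f₀ (‖x‖ ^ 2) + 4 * fderiv ℝ H x x * f₁ (‖x‖ ^ 2)
        + H x * (4 * ‖x‖ ^ 2 * f₂ (‖x‖ ^ 2) + 2 * N * f₁ (‖x‖ ^ 2)) := by
  have hneg : ∀ y : EuclideanSpace ℝ (Fin N), (-1 : ℝ) < ‖y‖ ^ 2 :=
    fun y => by have h : (0:ℝ) ≤ ‖y‖ ^ 2 := sq_nonneg _; linarith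
  have hcomp0 : ∀ y : EuclideanSpace ℝ (Fin N), HasFDerivAt (fun z => f₀ (‖z‖ ^ 2))
      (f₁ (‖y‖ ^ 2) • ((2 : ℝ) • innerSL ℝ y)) y :=
    fun y => (hf1 _ (hneg y)).comp_hasFDerivAt y (hasFDerivAt_normsq y)
  have hcomp1 : ∀ y : EuclideanSpace ℝ (Fin N), HasFDerivAt (fun z => f₁ (‖z‖ ^ 2))
      (f₂ (‖y‖ ^ 2) • ((2 : ℝ) • innerSL ℝ y)) y :=
    fun y => (hf2 _ (hneg y)).comp_hasFDerivAt y (hasFDerivAt_normsq y)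
  have hHd : ∀ y : EuclideanSpace ℝ (Fin N), HasFDerivAt H (fderiv ℝ H y) y :=
    fun y => (hH.differentiable (by simp) y).hasFDerivAt
  have hw : ∀ y : EuclideanSpace ℝ (Fin N), HasFDerivAt (fun z => H z * f₀ (‖z‖ ^ 2))
      (H y • (f₁ (‖y‖ ^ 2) • ((2 : ℝ) • innerSL ℝ y)) + f₀ (‖y‖ ^ 2) • fderiv ℝ H y) y :=
    fun y => (hHd y).mul (hcomp0 y)
  have hfder : ∀ (v y : EuclideanSpace ℝ (Fin N)),
      fderiv ℝ (fun z => H z * f₀ (‖z‖ ^ 2)) y v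
        = H y * (f₁ (‖y‖ ^ 2) * (2 * (innerSL ℝ v) y)) + f₀ (‖y‖ ^ 2) * fderiv ℝ H y v := by
    intro v y
    rw [(hw y).fderiv]
    simp only [ContinuousLinearMap.add_apply, ContinuousLinearMap.smul_apply, smul_eq_mul,
      innerSL_apply_apply]
    rw [real_inner_comm y v]
  have hsecond : ∀ i : Fin N,
      secondDeriv (fun y => H y * f₀ (‖y‖ ^ 2)) (EuclideanSpace.single i 1) x
        = f₀ (‖x‖ ^ 2) * secondDeriv H (EuclideanSpace.single i 1) x
          + 4 * f₁ (‖x‖ ^ 2) * x i * fderiv ℝ H x (EuclideanSpace.single i 1)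
          + H x * (2 * f₁ (‖x‖ ^ 2) + 4 * f₂ (‖x‖ ^ 2) * x i ^ 2) := by
    intro i
    set v : EuclideanSpace ℝ (Fin N) := EuclideanSpace.single i 1 with hv
    have hg1 : DifferentiableAt ℝ (fun y => fderiv ℝ H y v) x :=
      (((hH.fderiv_right (m := 1) le_top).differentiable one_ne_zero) x).clm_apply (differentiableAt_const v)
    have hℓ : HasFDerivAt (fun y : EuclideanSpace ℝ (Fin N) => (2 : ℝ) * (innerSL ℝ v) y)
        ((2 : ℝ) • innerSL ℝ v) x := ((innerSL ℝ v).hasFDerivAt).const_mul 2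
    have hP := (hcomp1 x).mul hℓ
    have hA := (hHd x).mul hP
    have hB := (hcomp0 x).mul hg1.hasFDerivAt
    have hG := hA.add hB
    have hfun : (fun y => fderiv ℝ (fun z => H z * f₀ (‖z‖ ^ 2)) y v)
        = fun y => H y * (f₁ (‖y‖ ^ 2) * (2 * (innerSL ℝ v) y)) + f₀ (‖y‖ ^ 2) * fderiv ℝ H y v :=
      funext fun y => hfder v y
    have hsd : secondDeriv (fun y => H y * f₀ (‖y‖ ^ 2)) v x
        = fderiv ℝ (fun y => H y * (f₁ (‖y‖ ^ 2) * (2 * (innerSL ℝ v) y))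
            + f₀ (‖y‖ ^ 2) * fderiv ℝ H y v) x v := by
      rw [secondDeriv, hfun]
    rw [hsd, HasFDerivAt.fderiv (f := fun y => H y * (f₁ (‖y‖ ^ 2) * (2 * (innerSL ℝ v) y))
      + f₀ (‖y‖ ^ 2) * fderiv ℝ H y v) hG]
    have hvv : (innerSL ℝ v) v = 1 := by simp [hv, EuclideanSpace.inner_single_left,
      EuclideanSpace.single_apply]
    have hvx : (innerSL ℝ v) x = x i := by simp [hv, EuclideanSpace.inner_single_left]
    have hxv : (innerSL ℝ x) v = x i := by
      simp [hv, EuclideanSpace.inner_single_right]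
    have hsD : fderiv ℝ (fun y => fderiv ℝ H y v) x v = secondDeriv H v x := rfl
    simp only [ContinuousLinearMap.add_apply, ContinuousLinearMap.smul_apply, smul_eq_mul,
      hvv, hvx, hxv, hsD, Pi.mul_apply]
    ring
  unfold laplacian
  rw [Finset.sum_congr rfl (fun i _ => hsecond i)]
  have hx1 : ∑ i : Fin N, 4 * f₁ (‖x‖ ^ 2) * x i * fderiv ℝ H x (EuclideanSpace.single i 1)
      = 4 * f₁ (‖x‖ ^ 2) * fderiv ℝ H x x := by
    have : fderiv ℝ H x x = ∑ i : Fin N, x i * fderiv ℝ H x (EuclideanSpace.single i 1) := by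
      have h1 : fderiv ℝ H x x = fderiv ℝ H x (∑ i : Fin N, x i • EuclideanSpace.single i 1) := by
        rw [sum_coord_smul_single]
      rw [h1, map_sum]
      simp
    rw [this, Finset.mul_sum]
    apply Finset.sum_congr rfl
    intro i _
    ring
  have hS3 : ∑ i : Fin N, H x * (2 * f₁ (‖x‖ ^ 2) + 4 * f₂ (‖x‖ ^ 2) * x i ^ 2)
      = H x * (2 * f₁ (‖x‖ ^ 2) * N + 4 * f₂ (‖x‖ ^ 2) * ‖x‖ ^ 2) := by
    rw [← Finset.mul_sum, Finset.sum_add_distrib, Finset.sum_const, ← Finset.mul_sum,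
      ← normsq_eq_sum, Finset.card_univ, Fintype.card_fin]
    ring
  rw [Finset.sum_add_distrib, Finset.sum_add_distrib, ← Finset.mul_sum, hx1, hS3]
  ring

/-! ### Main theorem -/

theorem statement4 (N n k : ℕ) (hN : 3 ≤ N) (hk : k ≤ n)
    (H : EuclideanSpace ℝ (Fin N) → ℝ)
    (hpoly : ∃ P : MvPolynomial (Fin N) ℝ,
      ∀ x : EuclideanSpace ℝ (Fin N), H x = MvPolynomial.eval (fun i => x i) P)
    (hharm : ∀ x, laplacian H x = 0)
    (hhom : ∀ c : ℝ, 0 < c → ∀ x, H (c • x) = c ^ k * H x) :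
    ∀ x : EuclideanSpace ℝ (Fin N),
      -laplacian (fun y =>
          H y * (1 + ‖y‖ ^ 2) ^ (-((k : ℝ) + ((N : ℝ) - 2) / 2)) *
            jacobiP (n - k) ((k : ℝ) + ((N : ℝ) - 2) / 2) ((k : ℝ) + ((N : ℝ) - 2) / 2)
              ((1 - ‖y‖ ^ 2) / (1 + ‖y‖ ^ 2))) x =
        ((2 * (n : ℝ) + N) * (2 * (n : ℝ) + N - 2) / ((N : ℝ) * ((N : ℝ) - 2))) *
          U N x ^ ((4 : ℝ) / ((N : ℝ) - 2)) *
          (H x * (1 + ‖x‖ ^ 2) ^ (-((k : ℝ) + ((N : ℝ) - 2) / 2)) *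
            jacobiP (n - k) ((k : ℝ) + ((N : ℝ) - 2) / 2) ((k : ℝ) + ((N : ℝ) - 2) / 2)
              ((1 - ‖x‖ ^ 2) / (1 + ‖x‖ ^ 2))) := by
  intro x
  obtain ⟨P, hP⟩ := hpoly
  have hHsm : ContDiff ℝ ⊤ H := by
    have hHe : H = fun x => MvPolynomial.eval (fun i => x i) P := funext hP
    rw [hHe]
    exact contDiff_mvpoly N P
  have hN3 : (3 : ℝ) ≤ (N : ℝ) := by exact_mod_cast hN
  have hNN : ((N : ℝ) * ((N : ℝ) - 2)) ≠ 0 := by nlinarith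
  have hs0 : (0 : ℝ) ≤ ‖x‖ ^ 2 := sq_nonneg _
  have hs1 : (-1 : ℝ) < ‖x‖ ^ 2 := by linarith
  have hu : (0 : ℝ) < 1 + ‖x‖ ^ 2 := by linarith
  -- rewrite the function inside the Laplacian
  have hfun : (fun y : EuclideanSpace ℝ (Fin N) =>
      H y * (1 + ‖y‖ ^ 2) ^ (-((k : ℝ) + ((N : ℝ) - 2) / 2)) *
        jacobiP (n - k) ((k : ℝ) + ((N : ℝ) - 2) / 2) ((k : ℝ) + ((N : ℝ) - 2) / 2)
          ((1 - ‖y‖ ^ 2) / (1 + ‖y‖ ^ 2)))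
      = fun y => H y * F0 ((k : ℝ) + ((N : ℝ) - 2) / 2) (n - k) (‖y‖ ^ 2) := by
    funext y
    rw [mul_assoc, jacobi_rewrite ((k : ℝ) + ((N : ℝ) - 2) / 2) (n - k) (sq_nonneg ‖y‖)]
  rw [hfun]
  rw [laplacian_mul_radial H hHsm _ _ _
    (fun t ht => hasDerivAt_F0 ((k : ℝ) + ((N : ℝ) - 2) / 2) (n - k) ht)
    (fun t ht => hasDerivAt_F1 ((k : ℝ) + ((N : ℝ) - 2) / 2) (n - k) ht) x]
  rw [hharm x, euler_identity H hHsm hhom x]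
  -- rewrite the right-hand side
  have hwx : H x * (1 + ‖x‖ ^ 2) ^ (-((k : ℝ) + ((N : ℝ) - 2) / 2)) *
      jacobiP (n - k) ((k : ℝ) + ((N : ℝ) - 2) / 2) ((k : ℝ) + ((N : ℝ) - 2) / 2)
        ((1 - ‖x‖ ^ 2) / (1 + ‖x‖ ^ 2))
      = H x * F0 ((k : ℝ) + ((N : ℝ) - 2) / 2) (n - k) (‖x‖ ^ 2) := by
    rw [mul_assoc, jacobi_rewrite ((k : ℝ) + ((N : ℝ) - 2) / 2) (n - k) hs0]
  rw [hwx]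
  -- simplify U ^ (4/(N-2))
  have hC0 : (0 : ℝ) ≤ (N : ℝ) * ((N : ℝ) - 2) := by nlinarith
  have hN2 : ((N : ℝ) - 2) ≠ 0 := by nlinarith
  have hU : U N x ^ ((4 : ℝ) / ((N : ℝ) - 2))
      = (N : ℝ) * ((N : ℝ) - 2) * (1 + ‖x‖ ^ 2) ^ (-(2 : ℝ)) := by
    unfold U
    rw [Real.mul_rpow (Real.rpow_nonneg hC0 _) (Real.rpow_nonneg hu.le _),
      ← Real.rpow_mul hC0, ← Real.rpow_mul hu.le]
    rw [show ((N : ℝ) - 2) / 4 * ((4 : ℝ) / ((N : ℝ) - 2)) = 1 by field_simp,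
      show (-(((N : ℝ) - 2) / 2)) * ((4 : ℝ) / ((N : ℝ) - 2)) = -(2 : ℝ) by field_simp; ring]
    rw [Real.rpow_one]
  have hU2 : ((2 * (n : ℝ) + N) * (2 * (n : ℝ) + N - 2) / ((N : ℝ) * ((N : ℝ) - 2))) *
      U N x ^ ((4 : ℝ) / ((N : ℝ) - 2))
      = (2 * (n : ℝ) + N) * (2 * (n : ℝ) + N - 2) * (1 + ‖x‖ ^ 2) ^ (-(2 : ℝ)) := by
    rw [hU, ← mul_assoc, div_mul_cancel₀ _ hNN]
  rw [hU2]
  have hF0 : F0 ((k : ℝ) + ((N : ℝ) - 2) / 2) (n - k) (‖x‖ ^ 2)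
      = (1 + ‖x‖ ^ 2) ^ (-(((n - k : ℕ) : ℝ) + ((k : ℝ) + ((N : ℝ) - 2) / 2)))
          * Qf ((k : ℝ) + ((N : ℝ) - 2) / 2) (n - k) (‖x‖ ^ 2) := rfl
  rw [hF0]
  have hODE := FODE ((k : ℝ) + ((N : ℝ) - 2) / 2) (n - k) hs1
  have hcomb : (1 + ‖x‖ ^ 2) ^ (-(2 : ℝ)) *
      (1 + ‖x‖ ^ 2) ^ (-(((n - k : ℕ) : ℝ) + ((k : ℝ) + ((N : ℝ) - 2) / 2)))
      = (1 + ‖x‖ ^ 2) ^ (-(((n - k : ℕ) : ℝ) + ((k : ℝ) + ((N : ℝ) - 2) / 2)) - 2) := by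
    rw [← Real.rpow_add hu]
    congr 1
    ring
  have hmk : (((n - k : ℕ)) : ℝ) = (n : ℝ) - (k : ℝ) := Nat.cast_sub hk
  rw [hmk] at hODE hcomb ⊢
  linear_combination (-(H x)) * hODE
    + (-((2 * (n : ℝ) + N) * (2 * (n : ℝ) + N - 2)) * H x
        * Qf ((k : ℝ) + ((N : ℝ) - 2) / 2) (n - k) (‖x‖ ^ 2)) * hcomb
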